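/- For each landing state ν ∈ {0,1}^h with exactly h−f ones, the number of TL-states ν̂ projecting to ν (i.e., ν̂_t ≠ 0 exactly when ν_t = 1) equals Δ(ν) = ∏_{t=1}^h (1 + φ_t(ν)), where φ_t(ν) = |{j : t < j ≤ h, ν_j = 0}| if ν_t = 1, and φ_t(ν) = 0 if ν_t = 0. -/

import Mathlib

open Finset
open scoped Classical

/-- Stirling numbers of the second kind. -/
def stirling : ℕ → ℕ → ℕ
  | 0, 0 => 1
  | 0, _ + 1 => 0
  | _ + 1, 0 => 0
  | n + 1, k + 1 => (k + 1) * stirling n (k + 1) + stirling n k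

/-- Bell numbers. -/
def bellNum (n : ℕ) : ℕ := ∑ k ∈ Finset.range (n + 1), stirling n k

/-- A TL-state of length `h`: `ν t = 0` means no ball lands at (1-based) time `t+1`;
otherwise `ν t` is the airtime of the ball landing at time `t+1`, which must be `≥ t+1`,
and no two balls were thrown at the same instant. -/
def IsTL (h : ℕ) (ν : Fin h → Fin (h + 1)) : Prop :=
  (∀ t : Fin h, (ν t : ℕ) = 0 ∨ t.val + 1 ≤ (ν t : ℕ)) ∧
  ∀ j k : Fin h, j ≠ k → (ν j : ℕ) ≠ 0 → (ν k : ℕ) ≠ 0 →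
    (ν j : ℕ) + k.val ≠ (ν k : ℕ) + j.val

/-- Number of empty slots of a TL-state. -/
def tlZeros {h : ℕ} (ν : Fin h → Fin (h + 1)) : ℕ :=
  (Finset.univ.filter (fun t : Fin h => (ν t : ℕ) = 0)).card

/-- Number of zeros of a landing state. -/
def numZeros {h : ℕ} (ν : Fin h → Bool) : ℕ :=
  (Finset.univ.filter (fun t : Fin h => ν t = false)).card

/-- `φ_t(ν)` (with `t : Fin h` representing 1-based time `t+1`). -/
def phi {h : ℕ} (ν : Fin h → Bool) (t : Fin h) : ℕ :=
  if ν t = true then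
    (Finset.univ.filter (fun j : Fin h => t < j ∧ ν j = false)).card
  else 0

/-- The weight `Δ(ν)`. -/
def Delta {h : ℕ} (ν : Fin h → Bool) : ℕ := ∏ t : Fin h, (1 + phi ν t)

/-- 1-based access to a landing state, `false` out of range (convention `ν_t = 0` for `t > h`). -/
def getB {h : ℕ} (ν : Fin h → Bool) (j : ℕ) : Bool :=
  if hj : 1 ≤ j ∧ j ≤ h then ν ⟨j - 1, by omega⟩ else false

/-- Throwing operator on landing states: `theta 0` is the left shift (wait), and for
`1 ≤ j`, `theta j` shifts left and places a ball at 1-based position `j`. -/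
def theta {h : ℕ} (j : ℕ) (ν : Fin h → Bool) : Fin h → Bool :=
  fun t => if t.val + 1 = j then true else getB ν (t.val + 2)

/-- 1-based access to a TL-state given as a ℕ-valued tuple, `0` out of range. -/
def getN {h : ℕ} (ν : Fin h → ℕ) (j : ℕ) : ℕ :=
  if hj : 1 ≤ j ∧ j ≤ h then ν ⟨j - 1, by omega⟩ else 0

/-- Throwing operator on ℕ-valued TL-states. -/
def thetaN {h : ℕ} (j : ℕ) (ν : Fin h → ℕ) : Fin h → ℕ :=
  fun t => if t.val + 1 = j then j else getN ν (t.val + 2)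

/-- Transition probabilities for the standard juggling chain on landing states. -/
noncomputable def pStd (h f : ℕ) (ν ω : Fin h → Bool) : ℝ :=
  if getB ν 1 = false then (if ω = theta 0 ν then 1 else 0)
  else if ∃ j, 1 ≤ j ∧ j ≤ h ∧ getB ν (j + 1) = false ∧ ω = theta j ν then
    1 / ((f : ℝ) + 1)
  else 0

/-- The set of landing states with exactly `f` zeros. -/
noncomputable def States (h f : ℕ) : Finset (Fin h → Bool) :=
  Finset.univ.filter (fun ν => numZeros ν = f)

/-- The set of TL-states with exactly `f` empty slots. -/
noncomputable def TLStates (h f : ℕ) : Finset (Fin h → Fin (h + 1)) :=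
  Finset.univ.filter (fun ν => IsTL h ν ∧ tlZeros ν = f)

/-- Projection from TL-states to landing states. -/
def proj {h : ℕ} (ν : Fin h → Fin (h + 1)) : Fin h → Bool :=
  fun t => decide ((ν t : ℕ) ≠ 0)

/-- Transition probabilities for the TL-state chain. -/
noncomputable def pHat (h f : ℕ) (μ ν : Fin h → Fin (h + 1)) : ℝ :=
  if getN (h := h) (fun s => (μ s : ℕ)) 1 = 0 then
    (if (fun s => (ν s : ℕ)) = thetaN 0 (fun s => (μ s : ℕ)) then 1 else 0)
  else if ∃ j, 1 ≤ j ∧ j ≤ h ∧ getN (h := h) (fun s => (μ s : ℕ)) (j + 1) = 0 ∧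
      (fun s => (ν s : ℕ)) = thetaN j (fun s => (μ s : ℕ)) then
    1 / ((f : ℝ) + 1)
  else 0

section Aux

/-- TL-states supported exactly on `S`. -/
def Good (h : ℕ) (S : Finset (Fin h)) (g : Fin h → Fin (h + 1)) : Prop :=
  (∀ t ∈ S, t.val + 1 ≤ (g t : ℕ)) ∧ (∀ t : Fin h, t ∉ S → (g t : ℕ) = 0) ∧
  ∀ j ∈ S, ∀ k ∈ S, j ≠ k → (g j : ℕ) + k.val ≠ (g k : ℕ) + j.val

noncomputable def psi (h : ℕ) (S : Finset (Fin h)) (t : Fin h) : ℕ :=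
  (Finset.univ.filter (fun j : Fin h => t < j ∧ j ∉ S)).card

lemma psi_min (h : ℕ) (S : Finset (Fin h)) (t0 : Fin h) (ht0 : t0 ∈ S)
    (hmin : ∀ t ∈ S, t0 ≤ t) :
    (S.erase t0).card + psi h S t0 = h - 1 - t0.val := by
  classical
  have hT : (Finset.Ioi t0).card = h - 1 - t0.val := Fin.card_Ioi t0
  have hsplit : ((Finset.Ioi t0).filter (fun j => j ∈ S)).card
      + ((Finset.Ioi t0).filter (fun j => j ∉ S)).card = (Finset.Ioi t0).card :=
    Finset.card_filter_add_card_filter_not _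
  have h1 : (Finset.Ioi t0).filter (fun j => j ∈ S) = S.erase t0 := by
    ext j
    simp only [Finset.mem_filter, Finset.mem_Ioi, Finset.mem_erase]
    constructor
    · rintro ⟨hlt, hj⟩; exact ⟨ne_of_gt hlt, hj⟩
    · rintro ⟨hne, hj⟩; exact ⟨lt_of_le_of_ne (hmin j hj) (Ne.symm hne), hj⟩
  have h2 : (Finset.Ioi t0).filter (fun j => j ∉ S)
      = Finset.univ.filter (fun j : Fin h => t0 < j ∧ j ∉ S) := by
    ext j; simp [Finset.mem_Ioi]
  rw [h1, h2] at hsplit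
  rw [← hT, ← hsplit]; rfl

lemma fiber_card (h : ℕ) (S : Finset (Fin h)) (t0 : Fin h) (ht0 : t0 ∈ S)
    (hmin : ∀ t ∈ S, t0 ≤ t) (g' : Fin h → Fin (h + 1))
    (hg' : Good h (S.erase t0) g') :
    ((Finset.univ.filter (fun g : Fin h → Fin (h + 1) => Good h S g)).filter
      (fun g => Function.update g t0 0 = g')).card = 1 + psi h S t0 := by
  classical
  obtain ⟨hg'1, hg'2, hg'3⟩ := hg'
  set S' := S.erase t0 with hS'
  set A : Finset (Fin (h + 1)) :=
    Finset.univ.filter (fun v : Fin (h + 1) => t0.val + 1 ≤ v.val ∧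
      ∀ t' ∈ S', (v : ℕ) + t'.val ≠ (g' t' : ℕ) + t0.val) with hA
  -- step 1: the fiber is in bijection with A via evaluation at t0
  have hcard : ((Finset.univ.filter (fun g : Fin h → Fin (h + 1) => Good h S g)).filter
      (fun g => Function.update g t0 0 = g')).card = A.card := by
    apply Finset.card_bij (fun g _ => g t0)
    · intro g hg
      simp only [Finset.mem_filter, Finset.mem_univ, true_and] at hg
      obtain ⟨⟨hb, hz, hd⟩, hu⟩ := hg
      simp only [hA, Finset.mem_filter, Finset.mem_univ, true_and]
      refine ⟨hb t0 ht0, fun t' ht' => ?_⟩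
      have ht'S : t' ∈ S := Finset.mem_of_mem_erase ht'
      have ht'ne : t' ≠ t0 := Finset.ne_of_mem_erase ht'
      have : g t' = g' t' := by
        rw [← hu]; simp [Function.update_of_ne ht'ne]
      rw [← this]
      exact hd t0 ht0 t' ht'S (Ne.symm ht'ne)
    · intro g1 hg1 g2 hg2 heq
      simp only [Finset.mem_filter] at hg1 hg2
      funext t
      by_cases ht : t = t0
      · subst ht; exact heq
      · have e1 : g1 t = g' t := by
          rw [← hg1.2]; simp [Function.update_of_ne ht]
        have e2 : g2 t = g' t := by
          rw [← hg2.2]; simp [Function.update_of_ne ht]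
        rw [e1, e2]
    · intro v hv
      simp only [hA, Finset.mem_filter, Finset.mem_univ, true_and] at hv
      obtain ⟨hv1, hv2⟩ := hv
      refine ⟨Function.update g' t0 v, ?_, by simp⟩
      have hg't0 : g' t0 = 0 := by
        have := hg'2 t0 (Finset.notMem_erase t0 S)
        exact Fin.ext this
      simp only [Finset.mem_filter, Finset.mem_univ, true_and]
      constructor
      · refine ⟨?_, ?_, ?_⟩
        · intro t ht
          by_cases h' : t = t0
          · subst h'; simpa using hv1
          · rw [Function.update_of_ne h']
            exact hg'1 t (Finset.mem_erase.2 ⟨h', ht⟩)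
        · intro t ht
          have h' : t ≠ t0 := fun e => ht (e ▸ ht0)
          rw [Function.update_of_ne h']
          exact hg'2 t (fun hc => ht (Finset.mem_of_mem_erase hc))
        · intro j hj k hk hjk
          by_cases hj0 : j = t0
          · have hk0 : k ≠ t0 := fun e => hjk (by rw [hj0, ← e])
            rw [hj0, Function.update_self, Function.update_of_ne hk0]
            exact hv2 k (Finset.mem_erase.2 ⟨hk0, hk⟩)
          · by_cases hk0 : k = t0
            · rw [hk0, Function.update_self, Function.update_of_ne hj0]
              intro hc
              exact hv2 j (Finset.mem_erase.2 ⟨hj0, hj⟩) hc.symm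
            · rw [Function.update_of_ne hj0, Function.update_of_ne hk0]
              exact hg'3 j (Finset.mem_erase.2 ⟨hj0, hj⟩) k (Finset.mem_erase.2 ⟨hk0, hk⟩) hjk
      · funext t
        by_cases h' : t = t0
        · subst h'; simp [hg't0]
        · simp [Function.update_of_ne h']
  rw [hcard]
  -- step 2: compute A.card
  have hvbound : ∀ t' ∈ S', (g' t' : ℕ) + t0.val - t'.val ≤ h := by
    intro t' ht'
    have h1 : (g' t' : ℕ) ≤ h := Fin.is_le _
    have h2 : t0 < t' := lt_of_le_of_ne (hmin t' (Finset.mem_of_mem_erase ht'))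
      (Ne.symm (Finset.ne_of_mem_erase ht'))
    have : t0.val < t'.val := h2
    omega
  set bad : Fin h → Fin (h + 1) := fun t' =>
    ⟨min ((g' t' : ℕ) + t0.val - t'.val) h, by omega⟩ with hbad
  have hAeq : A = (Finset.Ici (⟨t0.val + 1, by omega⟩ : Fin (h + 1))) \ S'.image bad := by
    ext v
    simp only [hA, Finset.mem_filter, Finset.mem_univ, true_and, Finset.mem_sdiff,
      Finset.mem_Ici, Finset.mem_image, not_exists]
    have hle : ((⟨t0.val + 1, by omega⟩ : Fin (h + 1)) ≤ v) ↔ t0.val + 1 ≤ v.val :=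
      Iff.rfl
    rw [hle]
    constructor
    · rintro ⟨h1, h2⟩
      refine ⟨h1, ?_⟩
      rintro t' ⟨ht', hbv⟩ 
      apply h2 t' ht'
      have h3 : t'.val + 1 ≤ (g' t' : ℕ) := hg'1 t' ht'
      have h4 := hvbound t' ht'
      have : v.val = min ((g' t' : ℕ) + t0.val - t'.val) h := by
        rw [← hbv]
      omega
    · rintro ⟨h1, h2⟩
      refine ⟨h1, fun t' ht' hc => h2 t' ⟨ht', ?_⟩⟩
      have h3 : t'.val + 1 ≤ (g' t' : ℕ) := hg'1 t' ht'
      have h4 := hvbound t' ht'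
      apply Fin.ext
      show min ((g' t' : ℕ) + t0.val - t'.val) h = v.val
      omega
  rw [hAeq, Finset.card_sdiff_of_subset, Fin.card_Ici, Finset.card_image_of_injOn]
  · have hinj : (S'.image bad).card = S'.card := by
      apply Finset.card_image_of_injOn
      intro t1 ht1 t2 ht2 heq
      by_contra hne
      have h1 : t1.val + 1 ≤ (g' t1 : ℕ) := hg'1 t1 ht1
      have h2 : t2.val + 1 ≤ (g' t2 : ℕ) := hg'1 t2 ht2
      have hb1 := hvbound t1 ht1
      have hb2 := hvbound t2 ht2
      have : min ((g' t1 : ℕ) + t0.val - t1.val) h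
          = min ((g' t2 : ℕ) + t0.val - t2.val) h := congrArg Fin.val heq
      exact hg'3 t1 ht1 t2 ht2 hne (by omega)
    have hps := psi_min h S t0 ht0 hmin
    have hS'lt : S'.card + psi h S t0 = h - 1 - t0.val := hps
    have ht0h : t0.val < h := t0.isLt
    simp only [Fin.val_mk]
    omega
  · intro t1 ht1 t2 ht2 heq
    by_contra hne
    have h1 : t1.val + 1 ≤ (g' t1 : ℕ) := hg'1 t1 ht1
    have h2 : t2.val + 1 ≤ (g' t2 : ℕ) := hg'1 t2 ht2
    have hb1 := hvbound t1 ht1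
    have hb2 := hvbound t2 ht2
    have : min ((g' t1 : ℕ) + t0.val - t1.val) h
        = min ((g' t2 : ℕ) + t0.val - t2.val) h := congrArg Fin.val heq
    exact hg'3 t1 ht1 t2 ht2 hne (by omega)
  · intro x hx
    simp only [Finset.mem_image] at hx
    obtain ⟨t', ht', rfl⟩ := hx
    have h3 : t'.val + 1 ≤ (g' t' : ℕ) := hg'1 t' ht'
    have h4 := hvbound t' ht'
    have h2f : t0 < t' := by
      rw [hS'] at ht'
      exact lt_of_le_of_ne (hmin t' (Finset.mem_of_mem_erase ht'))
        (Ne.symm (Finset.ne_of_mem_erase ht'))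
    have h2 : t0.val < t'.val := h2f
    rw [Finset.mem_Ici]
    show t0.val + 1 ≤ min ((g' t' : ℕ) + t0.val - t'.val) h
    omega

lemma key (h : ℕ) (S : Finset (Fin h)) :
    (Finset.univ.filter (fun g : Fin h → Fin (h + 1) => Good h S g)).card
      = ∏ t ∈ S, (1 + psi h S t) := by
  classical
  induction S using Finset.strongInduction with
  | _ S ih =>
  rcases S.eq_empty_or_nonempty with rfl | hne
  · rw [Finset.prod_empty]
    rw [Finset.card_eq_one]
    refine ⟨fun _ => 0, ?_⟩
    ext g
    simp only [Finset.mem_filter, Finset.mem_univ, true_and, Finset.mem_singleton]; simp only [Good]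
    constructor
    · rintro ⟨-, hz, -⟩
      funext t
      exact Fin.ext (hz t (Finset.notMem_empty t))
    · rintro rfl
      exact ⟨fun t ht => absurd ht (Finset.notMem_empty t),
        fun t _ => rfl, fun j hj => absurd hj (Finset.notMem_empty j)⟩
  · set t0 := S.min' hne with ht0
    have ht0S : t0 ∈ S := S.min'_mem hne
    have hmin : ∀ t ∈ S, t0 ≤ t := fun t ht => S.min'_le t ht
    set S' := S.erase t0 with hS'
    have hss : S' ⊂ S := Finset.erase_ssubset ht0S
    have key2 : ∀ g ∈ Finset.univ.filter (fun g : Fin h → Fin (h + 1) => Good h S g),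
        Function.update g t0 0 ∈
          Finset.univ.filter (fun g : Fin h → Fin (h + 1) => Good h S' g) := by
      intro g hg
      simp only [Finset.mem_filter, Finset.mem_univ, true_and] at hg ⊢
      obtain ⟨hb, hz, hd⟩ := hg
      refine ⟨?_, ?_, ?_⟩
      · intro t ht
        rw [Function.update_of_ne (Finset.ne_of_mem_erase ht)]
        exact hb t (Finset.mem_of_mem_erase ht)
      · intro t ht
        by_cases h' : t = t0
        · subst h'; simp
        · rw [Function.update_of_ne h']
          apply hz
          intro hc
          exact ht (Finset.mem_erase.2 ⟨h', hc⟩)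
      · intro j hj k hk hjk
        rw [Function.update_of_ne (Finset.ne_of_mem_erase hj),
          Function.update_of_ne (Finset.ne_of_mem_erase hk)]
        exact hd j (Finset.mem_of_mem_erase hj) k (Finset.mem_of_mem_erase hk) hjk
    rw [Finset.card_eq_sum_card_fiberwise key2]
    have hfib : ∀ g' ∈ Finset.univ.filter (fun g : Fin h → Fin (h + 1) => Good h S' g),
        ((Finset.univ.filter (fun g : Fin h → Fin (h + 1) => Good h S g)).filter
          (fun g => Function.update g t0 0 = g')).card = 1 + psi h S t0 := by
      intro g' hg'
      simp only [Finset.mem_filter, Finset.mem_univ, true_and] at hg'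
      exact fiber_card h S t0 ht0S hmin g' hg'
    rw [Finset.sum_congr rfl hfib, Finset.sum_const, smul_eq_mul, ih S' hss]
    rw [← Finset.prod_erase_mul S _ ht0S]
    congr 1
    apply Finset.prod_congr rfl
    intro t ht
    have htgt : t0 < t := lt_of_le_of_ne (hmin t (Finset.mem_of_mem_erase ht))
      (Ne.symm (Finset.ne_of_mem_erase ht))
    suffices hxy : (Finset.univ.filter fun j : Fin h => t < j ∧ j ∉ S')
        = (Finset.univ.filter fun j : Fin h => t < j ∧ j ∉ S) by
      unfold psi
      rw [hxy]
    ext j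
    simp only [Finset.mem_filter, Finset.mem_univ, true_and, hS']
    constructor
    · rintro ⟨h1, h2⟩
      exact ⟨h1, fun hc => h2 (Finset.mem_erase.2 ⟨ne_of_gt (htgt.trans h1), hc⟩)⟩
    · rintro ⟨h1, h2⟩
      exact ⟨h1, fun hc => h2 (Finset.mem_of_mem_erase hc)⟩

end Aux

/-- The number of TL-states projecting to a landing state `ν` with `h - f` ones is `Δ(ν)`. -/
theorem stmt1 (h f : ℕ) (hf : f ≤ h) (ν : Fin h → Bool)
    (hones : (Finset.univ.filter (fun t : Fin h => ν t = true)).card = h - f) :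
    (Finset.univ.filter
        (fun νh : Fin h → Fin (h + 1) => IsTL h νh ∧ proj νh = ν)).card = Delta ν := by
  classical
  set S : Finset (Fin h) := Finset.univ.filter (fun t => ν t = true) with hS
  have hset : (Finset.univ.filter
        (fun νh : Fin h → Fin (h + 1) => IsTL h νh ∧ proj νh = ν))
      = Finset.univ.filter (fun g : Fin h → Fin (h + 1) => Good h S g) := by
    ext g
    simp only [Finset.mem_filter, Finset.mem_univ, true_and]
    constructor
    · rintro ⟨⟨h1, h2⟩, hp⟩
      have hproj : ∀ t, t ∈ S ↔ (g t : ℕ) ≠ 0 := by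
        intro t
        simp only [hS, Finset.mem_filter, Finset.mem_univ, true_and]
        rw [← congrFun hp t]
        simp [proj]
      refine ⟨?_, ?_, ?_⟩
      · intro t ht
        rcases h1 t with h0 | h0
        · exact absurd h0 ((hproj t).1 ht)
        · exact h0
      · intro t ht
        by_contra hc
        exact ht ((hproj t).2 hc)
      · intro j hj k hk hjk
        exact h2 j k hjk ((hproj j).1 hj) ((hproj k).1 hk)
    · rintro ⟨h1, h2, h3⟩
      have hproj : ∀ t, (g t : ℕ) ≠ 0 ↔ t ∈ S := by
        intro t
        by_cases ht : t ∈ S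
        · have := h1 t ht
          simp only [ht, iff_true]
          omega
        · have := h2 t ht
          simp [this, ht]
      refine ⟨⟨?_, ?_⟩, ?_⟩
      · intro t
        by_cases ht : t ∈ S
        · exact Or.inr (h1 t ht)
        · exact Or.inl (h2 t ht)
      · intro j k hjk hj hk
        exact h3 j ((hproj j).1 hj) k ((hproj k).1 hk) hjk
      · funext t
        by_cases hc : (g t : ℕ) = 0
        · have htS : t ∉ S := fun hm => by
            have := h1 t hm; omega
          have hν : ν t = false := by
            simpa [hS, Finset.mem_filter] using htS
          simp [proj, hc, hν]
        · have htS : t ∈ S := (hproj t).1 hc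
          have hν : ν t = true := by
            simpa [hS, Finset.mem_filter] using htS
          simp [proj, hc, hν]
  rw [hset, key h S]
  unfold Delta
  rw [← Finset.prod_subset (Finset.subset_univ S)
    (fun t _ ht => by simp [phi, show ¬ ν t = true by simpa [hS, Finset.mem_filter] using ht])]
  apply Finset.prod_congr rfl
  intro t ht
  have hν : ν t = true := by simpa [hS, Finset.mem_filter] using ht
  congr 1
  unfold psi phi
  rw [if_pos hν]
  congr 1
  ext j
  simp [hS, Finset.mem_filter]
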